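/- The hinge acceleration formula is consistent with Newton's law: if a0 = (I + e1e1ᵀ + e2e2ᵀ)^{-1} a with a = f/m − θ̇1×ν1 − θ̇2×ν2 − (I−e1e1ᵀ)f1/m − (I−e2e2ᵀ)f2/m, and a1 = a0 + (x1×(f1−m a0))/(m‖x1‖²) × x1 + θ̇1×ν1, a2 defined analogously, then a0 + a1 + a2 = f/m where f = f0 + f1 + f2. -/

import Mathlib

open Matrix

private lemma sum_sq_pos3 (v : Fin 3 → ℝ) (hv : v ≠ 0) : 0 < ∑ i, v i ^ 2 := by
  obtain ⟨i, hi⟩ := Function.ne_iff.mp hv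
  exact Finset.sum_pos' (fun j _ => sq_nonneg _)
    ⟨i, Finset.mem_univ i, pow_two_pos_of_ne_zero hi⟩

private lemma vmv_psd (e : Fin 3 → ℝ) : (vecMulVec e e).PosSemidef := by
  rw [vecMulVec_eq Unit]
  simpa [conjTranspose_replicateCol] using posSemidef_self_mul_conjTranspose (replicateCol Unit e)

private lemma vmv_eq (x : Fin 3 → ℝ) (hS : 0 < ∑ i, x i ^ 2) (e : Fin 3 → ℝ)
    (he : e = (Real.sqrt (∑ i, x i ^ 2))⁻¹ • x) :
    vecMulVec e e = (∑ i, x i ^ 2)⁻¹ • vecMulVec x x := by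
  subst he
  have hs : (Real.sqrt (∑ i, x i ^ 2))⁻¹ * (Real.sqrt (∑ i, x i ^ 2))⁻¹
      = (∑ i, x i ^ 2)⁻¹ := by
    rw [← mul_inv, Real.mul_self_sqrt hS.le]
  ext i j
  simp only [vecMulVec_apply, Matrix.smul_apply, Pi.smul_apply, smul_eq_mul]
  rw [← hs]; ring

set_option maxHeartbeats 1000000 in
private lemma cross_key (m : ℝ) (hm : m ≠ 0) (x g b : Fin 3 → ℝ)
    (hS : (∑ i, x i ^ 2) ≠ 0) :
    crossProduct ((m * ∑ i, x i ^ 2)⁻¹ • crossProduct x (g - m • b)) x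
      = m⁻¹ • (1 - (∑ i, x i ^ 2)⁻¹ • vecMulVec x x).mulVec g
        - b + ((∑ i, x i ^ 2)⁻¹ • vecMulVec x x).mulVec b := by
  rw [Fin.sum_univ_three] at hS ⊢
  funext i
  have hi : i = 0 ∨ i = 1 ∨ i = 2 := by revert i; decide
  rcases hi with rfl | rfl | rfl <;>
  · simp only [cross_apply, Matrix.mulVec, dotProduct, vecMulVec_apply,
      Fin.sum_univ_three, Matrix.one_apply, Matrix.add_apply, Matrix.sub_apply,
      Pi.add_apply, Pi.sub_apply, Pi.smul_apply, smul_eq_mul, Matrix.smul_apply,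
      Matrix.cons_val_zero, Matrix.cons_val_one, Matrix.head_cons,
      Matrix.cons_val_two, Matrix.tail_cons,
      show ((0:Fin 3) = 1) = False from by simp, show ((0:Fin 3) = 2) = False from by simp,
      show ((1:Fin 3) = 0) = False from by simp, show ((1:Fin 3) = 2) = False from by simp,
      show ((2:Fin 3) = 0) = False from by simp, show ((2:Fin 3) = 1) = False from by simp,
      if_true, if_false, ite_true, ite_false]
    field_simp
    ring

theorem hinge_newton (m : ℝ) (hm : 0 < m)
    (x1 x2 f0 f1 f2 θ1 θ2 ν1 ν2 a a0 a1 a2 f e1 e2 : Fin 3 → ℝ)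
    (hx1 : x1 ≠ 0) (hx2 : x2 ≠ 0)
    (he1 : e1 = (Real.sqrt (∑ i, x1 i ^ 2))⁻¹ • x1)
    (he2 : e2 = (Real.sqrt (∑ i, x2 i ^ 2))⁻¹ • x2)
    (hf : f = f0 + f1 + f2)
    (ha : a = m⁻¹ • f - crossProduct θ1 ν1 - crossProduct θ2 ν2
        - m⁻¹ • (1 - vecMulVec e1 e1).mulVec f1
        - m⁻¹ • (1 - vecMulVec e2 e2).mulVec f2)
    (ha0 : a0 = (1 + vecMulVec e1 e1 + vecMulVec e2 e2)⁻¹.mulVec a)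
    (ha1 : a1 = a0 +
        crossProduct ((m * ∑ i, x1 i ^ 2)⁻¹ • crossProduct x1 (f1 - m • a0)) x1
        + crossProduct θ1 ν1)
    (ha2 : a2 = a0 +
        crossProduct ((m * ∑ i, x2 i ^ 2)⁻¹ • crossProduct x2 (f2 - m • a0)) x2
        + crossProduct θ2 ν2) :
    a0 + a1 + a2 = m⁻¹ • f := by
  have hS1 := sum_sq_pos3 x1 hx1
  have hS2 := sum_sq_pos3 x2 hx2
  have hP1 := vmv_eq x1 hS1 e1 he1
  have hP2 := vmv_eq x2 hS2 e2 he2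
  have hMpd : (1 + vecMulVec e1 e1 + vecMulVec e2 e2).PosDef :=
    (Matrix.PosDef.one.add_posSemidef (vmv_psd e1)).add_posSemidef (vmv_psd e2)
  have hMa : (1 + vecMulVec e1 e1 + vecMulVec e2 e2).mulVec a0 = a := by
    rw [ha0, Matrix.mulVec_mulVec, Matrix.mul_nonsing_inv _ hMpd.det_pos.ne'.isUnit,
      Matrix.one_mulVec]
  rw [Matrix.add_mulVec, Matrix.add_mulVec, Matrix.one_mulVec, ha] at hMa
  rw [ha1, ha2, cross_key m hm.ne' x1 f1 a0 hS1.ne', cross_key m hm.ne' x2 f2 a0 hS2.ne',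
    ← hP1, ← hP2]
  funext i
  have h := congrFun hMa i
  simp only [Pi.add_apply, Pi.sub_apply, Pi.smul_apply, smul_eq_mul] at h ⊢
  linarith [h]
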